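/- Consider the family of equations sin(α) = tan(l)(α'(s) + κ(s)) for a periodic continuous function κ with period L. In the limit l → 0 the equation sin(α) = 0 has exactly two constant solutions α ≡ 0 and α ≡ π on the circle, and these are nondegenerate (the derivative of sin at 0 and π is ±1 ≠ 0); hence for all sufficiently small l > 0 the time-L monodromy map of α' = cot(l)sin(α) − κ has at least two fixed points. -/

import Mathlib

open Set Real

lemma lip_aux (c k : ℝ) : LipschitzWith (Real.nnabs c) (fun y => c * Real.sin y - k) := by
  apply LipschitzWith.of_dist_le_mul
  intro x y
  have h1 : (c * Real.sin x - k) - (c * Real.sin y - k) = c * (Real.sin x - Real.sin y) := by ring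
  have h2 : |Real.sin x - Real.sin y| ≤ |x - y| := by
    rw [Real.sin_sub_sin, abs_mul, abs_mul, abs_two]
    have h3 := Real.abs_sin_le_abs (x := (x - y)/2)
    have h4 := Real.abs_cos_le_one ((x + y)/2)
    have h5 : |(x - y)/2| = |x - y|/2 := by rw [abs_div]; norm_num
    nlinarith [abs_nonneg (x - y), abs_nonneg (Real.sin ((x - y)/2)),
      abs_nonneg (Real.cos ((x + y)/2))]
  calc dist (c * Real.sin x - k) (c * Real.sin y - k)
      = |c| * |Real.sin x - Real.sin y| := by rw [Real.dist_eq, h1, abs_mul]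
    _ ≤ |c| * |x - y| := by gcongr
    _ = (Real.nnabs c : ℝ) * dist x y := by rw [Real.dist_eq, Real.coe_nnabs]

lemma barrier_lower {u F : ℝ → ℝ} (hu : ∀ t, HasDerivAt u (F t) t) {c : ℝ}
    (hbar : ∀ t, u t = c → 0 < F t) (h0 : c ≤ u 0) : ∀ t, 0 ≤ t → c ≤ u t := by
  have ucont : Continuous u := by
    rw [continuous_iff_continuousAt]; exact fun t => (hu t).continuousAt
  by_contra hcon
  push_neg at hcon
  obtain ⟨t₁, ht₁0, ht₁⟩ := hcon
  have ht₁pos : 0 < t₁ := by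
    rcases eq_or_lt_of_le ht₁0 with h | h
    · exfalso; rw [← h] at ht₁; linarith
    · exact h
  set S : Set ℝ := Icc 0 t₁ ∩ u ⁻¹' (Ici c) with hS
  have hSclosed : IsClosed S := isClosed_Icc.inter (isClosed_Ici.preimage ucont)
  have hSne : S.Nonempty := ⟨0, ⟨le_rfl, ht₁pos.le⟩, h0⟩
  have hSbdd : BddAbove S := ⟨t₁, fun x hx => hx.1.2⟩
  set s := sSup S with hs
  have hsS : s ∈ S := hSclosed.csSup_mem hSne hSbdd
  have hsc : c ≤ u s := hsS.2
  have hst₁ : s < t₁ := by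
    rcases eq_or_lt_of_le hsS.1.2 with h | h
    · exfalso; rw [h] at hsc; linarith
    · exact h
  have hright : ∀ t, s < t → t ≤ t₁ → u t < c := by
    intro t hst htt₁
    by_contra h
    push_neg at h
    have : t ∈ S := ⟨⟨le_trans hsS.1.1 (le_of_lt hst), htt₁⟩, h⟩
    exact absurd (le_csSup hSbdd this) (not_le.mpr hst)
  have hev : ∀ᶠ t in nhdsWithin s (Ioi s), c < u t := by
    rcases eq_or_lt_of_le hsc with heq | hlt
    · -- u s = c, use positive derivative
      have hF : 0 < F s := hbar s heq.symm
      have hslope : Filter.Tendsto (slope u s) (nhdsWithin s {s}ᶜ) (nhds (F s)) :=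
        hasDerivAt_iff_tendsto_slope.mp (hu s)
      have h1 : ∀ᶠ t in nhdsWithin s {s}ᶜ, 0 < slope u s t :=
        hslope.eventually_const_lt hF
      have h2 : ∀ᶠ t in nhdsWithin s (Ioi s), 0 < slope u s t :=
        nhdsWithin_mono s (fun x hx => ne_of_gt hx) h1
      filter_upwards [h2, self_mem_nhdsWithin] with t hts ht
      have hts' : (0:ℝ) < t - s := sub_pos.mpr ht
      rw [slope_def_field] at hts
      have : 0 < u t - u s := by
        have := mul_pos hts hts'
        rwa [div_mul_cancel₀ _ (ne_of_gt hts')] at this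
      linarith [heq]
    · -- u s > c, use continuity
      have : ∀ᶠ t in nhds s, c < u t := (ucont.continuousAt (x := s)).eventually_const_lt hlt
      exact eventually_nhdsWithin_of_eventually_nhds this
  have hIoo : Ioo s t₁ ∈ nhdsWithin s (Ioi s) := Ioo_mem_nhdsGT hst₁
  obtain ⟨t, htc, htI⟩ := (hev.and (Filter.eventually_of_mem hIoo (fun x hx => hx))).exists
  exact absurd htc (not_lt.mpr (le_of_lt (hright t htI.1 htI.2.le)))

lemma barrier_upper {u F : ℝ → ℝ} (hu : ∀ t, HasDerivAt u (F t) t) {c : ℝ}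
    (hbar : ∀ t, u t = c → F t < 0) (h0 : u 0 ≤ c) : ∀ t, 0 ≤ t → u t ≤ c := by
  have := barrier_lower (u := fun t => -u t) (F := fun t => -F t)
    (fun t => (hu t).neg) (c := -c)
    (fun t ht => by
      have hut : u t = c := by linarith [neg_eq_iff_eq_neg.mp ht]
      simpa using hbar t hut)
    (by simpa using h0)
  intro t ht
  have := this t ht
  simpa using this


lemma exists_global_solution (c : ℝ) (κ : ℝ → ℝ) (hκ : Continuous κ) (M : ℝ)
    (hM : ∀ t, |κ t| ≤ M) (a : ℝ) :
    ∃ α : ℝ → ℝ, α 0 = a ∧ ∀ t, HasDerivAt α (c * Real.sin (α t) - κ t) t := by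
  have hM0 : 0 ≤ M := le_trans (abs_nonneg _) (hM 0)
  -- local solutions on [-(n+1), n+1]
  have hloc : ∀ n : ℕ, ∃ f : ℝ → ℝ, f 0 = a ∧ ∀ t ∈ Icc (-(n+1) : ℝ) (n+1),
      HasDerivWithinAt f (c * Real.sin (f t) - κ t) (Icc (-(n+1) : ℝ) (n+1)) t := by
    intro n
    have h0mem : (0:ℝ) ∈ Icc (-(n+1) : ℝ) (n+1) := by
      constructor <;> [linarith [Nat.cast_nonneg (α := ℝ) n]; positivity]
    have hpl : IsPicardLindelof (fun t y => c * Real.sin y - κ t)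
        (tmin := (-(n+1) : ℝ)) (tmax := (n+1 : ℝ)) ⟨0, h0mem⟩ a
        (Real.toNNReal ((|c| + M) * (n+1))) 0 (Real.toNNReal (|c| + M)) (Real.nnabs c) := by
      constructor
      · exact fun t _ => LipschitzWith.lipschitzOnWith (lip_aux c (κ t))
      · exact fun x _ => (continuous_const.sub hκ).continuousOn
      · intro t _ x _
        have h1 : |Real.sin x| ≤ 1 := Real.abs_sin_le_one x
        have h2 := hM t
        rw [Real.coe_toNNReal _ (by positivity)]
        calc ‖c * Real.sin x - κ t‖ = |c * Real.sin x - κ t| := rfl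
          _ ≤ |c * Real.sin x| + |κ t| := abs_sub _ _
          _ = |c| * |Real.sin x| + |κ t| := by rw [abs_mul]
          _ ≤ |c| * 1 + M := by gcongr
          _ ≤ |c| + M := by linarith
      · have h : max ((n+1 : ℝ) - 0) (0 - -(n+1)) = (n+1 : ℝ) := by
          simp
        rw [NNReal.coe_zero, sub_zero, Real.coe_toNNReal _ (by positivity),
          Real.coe_toNNReal _ (by positivity)]
        rw [show max ((n:ℝ)+1) (0 - -((n:ℝ)+1)) = n+1 by simp, sub_zero]
    exact hpl.exists_eq_forall_mem_Icc_hasDerivWithinAt₀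
  choose sol hsol0 hsol using hloc
  -- solutions agree on common intervals
  have hderiv : ∀ (n : ℕ) (t : ℝ), t ∈ Ioo (-(n+1) : ℝ) (n+1) →
      HasDerivAt (sol n) (c * Real.sin (sol n t) - κ t) t := by
    intro n t ht
    exact (hsol n t (Ioo_subset_Icc_self ht)).hasDerivAt (Icc_mem_nhds ht.1 ht.2)
  have hagree : ∀ m n : ℕ, m ≤ n → EqOn (sol m) (sol n) (Icc (-(m+1) : ℝ) (m+1)) := by
    intro m n hmn
    have hcast : (m : ℝ) ≤ n := Nat.cast_le.mpr hmn
    have hsub : Ioo (-(m+1) : ℝ) (m+1) ⊆ Ioo (-(n+1) : ℝ) (n+1) := by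
      apply Ioo_subset_Ioo <;> linarith
    apply ODE_solution_unique_of_mem_Icc (v := fun t y => c * Real.sin y - κ t)
      (K := Real.nnabs c) (s := fun _ => (univ : Set ℝ)) (t₀ := 0)
      (fun t _ => LipschitzWith.lipschitzOnWith (lip_aux c (κ t)))
    · constructor <;> [linarith [Nat.cast_nonneg (α := ℝ) m]; positivity]
    · exact fun t ht => (hsol m t ht).continuousWithinAt
    · exact fun t ht => hderiv m t ht
    · exact fun t _ => mem_univ _
    · intro t ht
      have hc : ContinuousOn (sol n) (Icc (-(n+1) : ℝ) (n+1)) :=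
        fun s hs => (hsol n s hs).continuousWithinAt
      exact (hc.mono (Icc_subset_Icc (by linarith) (by linarith))) t ht
    · exact fun t ht => hderiv n t (hsub ht)
    · exact fun t _ => mem_univ _
    · rw [hsol0 m, hsol0 n]
  -- patched global solution
  set α : ℝ → ℝ := fun t => sol ⌈|t|⌉₊ t with hα
  have hkey : ∀ (n : ℕ) (t : ℝ), |t| ≤ n + 1 → α t = sol n t := by
    intro n t ht
    have h1 : |t| ≤ (⌈|t|⌉₊ : ℝ) := Nat.le_ceil _
    have h2 := abs_le.mp h1
    have h3 := abs_le.mp ht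
    rcases le_total (⌈|t|⌉₊ : ℕ) n with h | h
    · exact hagree _ n h ⟨by linarith, by linarith⟩
    · exact (hagree n _ h ⟨by linarith, by linarith⟩).symm
  refine ⟨α, ?_, ?_⟩
  · have : α 0 = sol 0 0 := hkey 0 0 (by norm_num)
    rw [this, hsol0]
  · intro t
    set n : ℕ := ⌈|t|⌉₊ with hn
    have h1 : |t| ≤ (n : ℝ) + 1 := le_trans (Nat.le_ceil _) (by rw [← hn]; norm_num)
    have h2 : |t| < (n : ℝ) + 1 := lt_of_le_of_lt (Nat.le_ceil _) (by rw [← hn]; norm_num)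
    have h3 := abs_lt.mp h2
    have hda : HasDerivAt (sol n) (c * Real.sin (sol n t) - κ t) t :=
      hderiv n t ⟨by linarith, by linarith⟩
    have hev : α =ᶠ[nhds t] sol n := by
      have hmem : Icc (-(n+1) : ℝ) (n+1) ∈ nhds t := Icc_mem_nhds (by linarith) (by linarith)
      filter_upwards [hmem] with s hs
      exact hkey n s (abs_le.mpr ⟨by linarith [hs.1], by linarith [hs.2]⟩)
    have := hda.congr_of_eventuallyEq hev
    rwa [← hkey n t h1] at this

/-- In the limit `l → 0` the bicycle equation degenerates to `sin α = 0`, which has exactly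
the two nondegenerate constant solutions `α = 0` and `α = π` on the circle; hence for all
sufficiently small `l > 0` the time-`L` monodromy of `α' = cot(l) sin α - κ` has at least
two fixed points (two periodic-mod-2π solutions with distinct initial conditions mod 2π). -/
theorem stmt_13 (L : ℝ) (hL : 0 < L) (κ : ℝ → ℝ) (hκ : Continuous κ)
    (hκper : Function.Periodic κ L) :
    (∀ α ∈ Set.Ico (0 : ℝ) (2 * Real.pi), (Real.sin α = 0 ↔ α = 0 ∨ α = Real.pi)) ∧
    (Real.cos 0 ≠ 0 ∧ Real.cos Real.pi ≠ 0) ∧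
    ∃ ε > (0 : ℝ), ∀ l ∈ Set.Ioo (0 : ℝ) ε,
      ∃ α₁ α₂ : ℝ → ℝ,
        (∀ x, HasDerivAt α₁ (Real.cot l * Real.sin (α₁ x) - κ x) x) ∧
        (∀ x, HasDerivAt α₂ (Real.cot l * Real.sin (α₂ x) - κ x) x) ∧
        (∃ n : ℤ, α₁ L = α₁ 0 + n * (2 * Real.pi)) ∧
        (∃ n : ℤ, α₂ L = α₂ 0 + n * (2 * Real.pi)) ∧
        ¬ ∃ n : ℤ, α₁ 0 = α₂ 0 + n * (2 * Real.pi) := by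
  have hπ := Real.pi_pos
  refine ⟨?_, ⟨by norm_num, by norm_num [Real.cos_pi]⟩, ?_⟩
  · -- sin α = 0 ↔ α = 0 ∨ α = π on [0, 2π)
    rintro α ⟨hα0, hα2π⟩
    constructor
    · intro hsin
      obtain ⟨n, hn⟩ := Real.sin_eq_zero_iff.mp hsin
      have hn0 : (0:ℤ) ≤ n := by
        by_contra h
        push_neg at h
        have h' : n ≤ -1 := by omega
        have : (n:ℝ) ≤ -1 := by exact_mod_cast h'
        nlinarith
      have hn2 : n < 2 := by
        by_contra h
        push_neg at h
        have : (2:ℝ) ≤ (n:ℝ) := by exact_mod_cast h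
        nlinarith
      interval_cases n
      · left; rw [← hn]; norm_num
      · right; rw [← hn]; norm_num
    · rintro (rfl | rfl) <;> simp
  -- bound on κ
  obtain ⟨C, hC⟩ := (isCompact_Icc (a := (0:ℝ)) (b := L)).exists_bound_of_continuousOn
    hκ.continuousOn
  set M : ℝ := max C 0 with hMdef
  have hM : ∀ t, |κ t| ≤ M := by
    intro t
    obtain ⟨y, hy, hyeq⟩ := hκper.exists_mem_Ico₀ hL t
    rw [hyeq]
    exact le_trans (hC y (Ico_subset_Icc_self hy)) (le_max_left _ _)
  have hM0 : 0 ≤ M := le_max_right _ _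
  have hsin4 : 0 < Real.sin (π/4) := Real.sin_pos_of_pos_of_lt_pi (by linarith) (by linarith)
  set x₀ : ℝ := Real.sin (π/4) / (M + 1) with hx₀def
  have hx₀pos : 0 < x₀ := div_pos hsin4 (by linarith)
  refine ⟨min (π/4) (Real.arctan x₀), lt_min (by linarith) ((by rw [← Real.arctan_zero]; exact Real.arctan_strictMono hx₀pos)), ?_⟩
  rintro l ⟨hl0, hlε⟩
  set c : ℝ := Real.cot l with hcdef
  -- key inequality : M + 1 < c * sin (π/4)
  have hlπ4 : l < π/4 := lt_of_lt_of_le hlε (min_le_left _ _)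
  have htanpos : 0 < Real.tan l := Real.tan_pos_of_pos_of_lt_pi_div_two hl0 (by linarith)
  have htanlt : Real.tan l < x₀ := by
    have h1 : l < Real.arctan x₀ := lt_of_lt_of_le hlε (min_le_right _ _)
    have h2 := Real.arctan_mem_Ioo x₀
    calc Real.tan l < Real.tan (Real.arctan x₀) := by
          apply Real.strictMonoOn_tan ⟨by linarith, by linarith⟩ ⟨h2.1, h2.2⟩ h1
      _ = x₀ := Real.tan_arctan x₀
  have hcot : c = (Real.tan l)⁻¹ := by
    rw [hcdef, Real.cot_eq_cos_div_sin, Real.tan_eq_sin_div_cos, inv_div]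
  have hcpos : 0 < c := by rw [hcot]; positivity
  have hkey : M + 1 < c * Real.sin (π/4) := by
    have h1 : c > x₀⁻¹ := by
      rw [hcot]
      exact (inv_strictAnti₀ htanpos htanlt)
    have h2 : x₀⁻¹ = (M + 1) / Real.sin (π/4) := by
      rw [hx₀def, inv_div]
    rw [h2] at h1
    calc M + 1 = ((M + 1) / Real.sin (π/4)) * Real.sin (π/4) := by
          field_simp
      _ < c * Real.sin (π/4) := by gcongr
  -- global solutions
  have hsol := exists_global_solution c κ hκ M hM
  choose A hA0 hA' using hsol
  -- monodromy map and its continuity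
  set φ : ℝ → ℝ := fun a => A a L with hφdef
  have hφlip : ∀ a b : ℝ, dist (φ a) (φ b) ≤ dist a b * Real.exp (|c| * L) := by
    intro a b
    have := dist_le_of_trajectories_ODE (v := fun t y => c * Real.sin y - κ t)
      (K := Real.nnabs c) (f := A a) (g := A b) (a := 0) (b := L)
      (δ := dist a b)
      (fun t => lip_aux c (κ t))
      (fun t _ => ((hA' a t).continuousAt).continuousWithinAt)
      (fun t _ => ((hA' a t).hasDerivWithinAt))
      (fun t _ => ((hA' b t).continuousAt).continuousWithinAt)
      (fun t _ => ((hA' b t).hasDerivWithinAt))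
      (by rw [hA0 a, hA0 b])
      L ⟨le_of_lt hL, le_rfl⟩
    simpa [Real.coe_nnabs] using this
  have hφcont : Continuous φ := by
    have : LipschitzWith (Real.toNNReal (Real.exp (|c| * L))) φ := by
      apply LipschitzWith.of_dist_le_mul
      intro a b
      rw [Real.coe_toNNReal _ (Real.exp_nonneg _)]
      calc dist (φ a) (φ b) ≤ dist a b * Real.exp (|c| * L) := hφlip a b
        _ = Real.exp (|c| * L) * dist a b := mul_comm _ _
    exact this.continuous
  set g : ℝ → ℝ := fun a => φ a - a with hgdef
  have hgcont : Continuous g := hφcont.sub continuous_id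
  -- barrier facts
  have hbarpos : ∀ a t : ℝ, Real.sin (A a t) = Real.sin (π/4) →
      0 < c * Real.sin (A a t) - κ t := by
    intro a t h
    rw [h]
    have := hM t
    have := abs_le.mp (hM t)
    linarith
  -- fixed point near π
  have hφu : φ (π - π/4) ≥ π - π/4 := by
    apply barrier_lower (hA' (π - π/4)) (c := π - π/4) _ (by rw [hA0]) L (le_of_lt hL)
    intro t ht
    rw [ht, Real.sin_pi_sub]
    have := abs_le.mp (hM t)
    linarith
  have hφd : φ (π + π/4) ≤ π + π/4 := by
    apply barrier_upper (hA' (π + π/4)) (c := π + π/4) _ (by rw [hA0]) L (le_of_lt hL)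
    intro t ht
    rw [ht]
    have hsinval : Real.sin (π + π/4) = -Real.sin (π/4) := by
      rw [Real.sin_add]; simp
    rw [hsinval]
    have := abs_le.mp (hM t)
    linarith
  have hex2 : ∃ a₂ ∈ Icc (π - π/4) (π + π/4), φ a₂ = a₂ := by
    have h0mem : (0:ℝ) ∈ Icc (g (π + π/4)) (g (π - π/4)) := by
      constructor
      · rw [hgdef]; simp only; linarith
      · rw [hgdef]; simp only; linarith
    have := intermediate_value_Icc' (by linarith : π - π/4 ≤ π + π/4) hgcont.continuousOn
    obtain ⟨a₂, ha₂mem, ha₂⟩ := this h0mem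
    exact ⟨a₂, ha₂mem, by simp only [hgdef] at ha₂; linarith⟩
  -- fixed point near 0
  have hφu0 : φ (π/4) ≥ π/4 := by
    apply barrier_lower (hA' (π/4)) (c := π/4) _ (by rw [hA0]) L (le_of_lt hL)
    intro t ht
    rw [ht]
    have := abs_le.mp (hM t)
    linarith
  have hφd0 : φ (-(π/4)) ≤ -(π/4) := by
    apply barrier_upper (hA' (-(π/4))) (c := -(π/4)) _ (by rw [hA0]) L (le_of_lt hL)
    intro t ht
    rw [ht, Real.sin_neg]
    have := abs_le.mp (hM t)
    linarith
  have hex1 : ∃ a₁ ∈ Icc (-(π/4)) (π/4), φ a₁ = a₁ := by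
    have h0mem : (0:ℝ) ∈ Icc (g (-(π/4))) (g (π/4)) := by
      constructor
      · rw [hgdef]; simp only; linarith
      · rw [hgdef]; simp only; linarith
    have := intermediate_value_Icc (by linarith : -(π/4) ≤ π/4) hgcont.continuousOn
    obtain ⟨a₁, ha₁mem, ha₁⟩ := this h0mem
    exact ⟨a₁, ha₁mem, by simp only [hgdef] at ha₁; linarith⟩
  obtain ⟨a₁, ha₁mem, ha₁⟩ := hex1
  obtain ⟨a₂, ha₂mem, ha₂⟩ := hex2
  refine ⟨A a₁, A a₂, hA' a₁, hA' a₂, ⟨0, by rw [hA0 a₁]; simpa using ha₁⟩,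
    ⟨0, by rw [hA0 a₂]; simpa using ha₂⟩, ?_⟩
  rintro ⟨n, hn⟩
  rw [hA0, hA0] at hn
  -- a₁ ∈ [-π/4, π/4], a₂ ∈ [3π/4, 5π/4], a₁ = a₂ + 2πn impossible
  have h1 := ha₁mem.1
  have h2 := ha₁mem.2
  have h3 := ha₂mem.1
  have h4 := ha₂mem.2
  have hneg : (n:ℝ) < 0 := by nlinarith
  have hneg' : n < 0 := by exact_mod_cast hneg
  have hle : n ≤ -1 := by omega
  have : (n:ℝ) ≤ -1 := by exact_mod_cast hle
  nlinarith
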